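/- Let H be a bialgebra over a field k and σ : H ⊗ H → k a normalized convolution-invertible 2-cocycle with convolution inverse σ⁻¹. Then for all x, y, z ∈ H: σ(x₍₁₎, y₍₁₎z₍₁₎) σ⁻¹(x₍₂₎y₍₂₎, z₍₂₎) = σ⁻¹(y₍₁₎, z) σ(x, y₍₂₎), and dually σ(x₍₁₎y₍₁₎, z₍₁₎) σ⁻¹(x₍₂₎, y₍₂₎z₍₂₎) = σ(y₍₂₎, z) σ⁻¹(x, y₍₁₎). -/

import Mathlib

open TensorProduct

set_option maxHeartbeats 1000000
set_option synthInstance.maxHeartbeats 400000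

noncomputable section

variable (k : Type*) [Field k] (H : Type*) [Ring H] [Bialgebra k H]

/-- The comultiplication of `H ⊗ H`: `x ⊗ y ↦ (x₍₁₎ ⊗ y₍₁₎) ⊗ (x₍₂₎ ⊗ y₍₂₎)`. -/
def comul2 : H ⊗[k] H →ₗ[k] (H ⊗[k] H) ⊗[k] (H ⊗[k] H) :=
  (TensorProduct.tensorTensorTensorComm k H H H H).toLinearMap
    ∘ₗ TensorProduct.map (Coalgebra.comul (R := k) (A := H)) (Coalgebra.comul (R := k) (A := H))

/-- Convolution product of two linear functionals on `H ⊗ H`. -/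
def conv2 (σ σ' : H ⊗[k] H →ₗ[k] k) : H ⊗[k] H →ₗ[k] k :=
  (LinearMap.mul' k k) ∘ₗ TensorProduct.map σ σ' ∘ₗ comul2 k H

/-- The counit of `H ⊗ H`. -/
def epsilon2 : H ⊗[k] H →ₗ[k] k :=
  (LinearMap.mul' k k) ∘ₗ
    TensorProduct.map (Coalgebra.counit (R := k) (A := H)) (Coalgebra.counit (R := k) (A := H))

/-- Normalization of a 2-cochain: `σ(1, x) = ε(x) = σ(x, 1)`. -/
def IsNormalized (σ : H ⊗[k] H →ₗ[k] k) : Prop :=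
  ∀ x : H, σ ((1 : H) ⊗ₜ[k] x) = Coalgebra.counit (R := k) (A := H) x
    ∧ σ (x ⊗ₜ[k] (1 : H)) = Coalgebra.counit (R := k) (A := H) x

/-- `x ⊗ (y ⊗ z) ↦ σ(y₍₁₎, z₍₁₎) σ(x, y₍₂₎z₍₂₎)`. -/
def cocLHS (σ : H ⊗[k] H →ₗ[k] k) : H ⊗[k] (H ⊗[k] H) →ₗ[k] k :=
  (LinearMap.mul' k k)
    ∘ₗ TensorProduct.map σ (σ ∘ₗ TensorProduct.map LinearMap.id (LinearMap.mul' k H))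
    ∘ₗ (TensorProduct.leftComm k H (H ⊗[k] H) (H ⊗[k] H)).toLinearMap
    ∘ₗ TensorProduct.map LinearMap.id (comul2 k H)

/-- `x ⊗ (y ⊗ z) ↦ σ(x₍₁₎, y₍₁₎) σ(x₍₂₎y₍₂₎, z)`. -/
def cocRHS (σ : H ⊗[k] H →ₗ[k] k) : H ⊗[k] (H ⊗[k] H) →ₗ[k] k :=
  (LinearMap.mul' k k)
    ∘ₗ TensorProduct.map σ (σ ∘ₗ TensorProduct.map (LinearMap.mul' k H) LinearMap.id)
    ∘ₗ (TensorProduct.assoc k (H ⊗[k] H) (H ⊗[k] H) H).toLinearMap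
    ∘ₗ TensorProduct.map (comul2 k H) LinearMap.id
    ∘ₗ (TensorProduct.assoc k H H H).symm.toLinearMap

/-- `σ` is a normalized 2-cocycle: `σ(x, σ(y₁,z₁)y₂z₂) = σ(σ(x₁,y₁)x₂y₂, z)`. -/
def IsCocycle (σ : H ⊗[k] H →ₗ[k] k) : Prop :=
  IsNormalized k H σ ∧ cocLHS k H σ = cocRHS k H σ

/-- The comultiplication of `H ⊗ (H ⊗ H)` (diagonal on all three factors). -/
def comul3 : H ⊗[k] (H ⊗[k] H) →ₗ[k]
    (H ⊗[k] (H ⊗[k] H)) ⊗[k] (H ⊗[k] (H ⊗[k] H)) :=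
  (TensorProduct.tensorTensorTensorComm k H H (H ⊗[k] H) (H ⊗[k] H)).toLinearMap
    ∘ₗ TensorProduct.map (Coalgebra.comul (R := k) (A := H)) (comul2 k H)

/-- Convolution product of two linear functionals on `H ⊗ (H ⊗ H)`. -/
def conv3 (f g : H ⊗[k] (H ⊗[k] H) →ₗ[k] k) : H ⊗[k] (H ⊗[k] H) →ₗ[k] k :=
  (LinearMap.mul' k k) ∘ₗ TensorProduct.map f g ∘ₗ comul3 k H

namespace Stmt6Aux

variable {k H}

/-- `∑ ε(x₁) • x₂ = x`. -/
lemma csum_left (x : H) (r : Coalgebra.Repr k x (H × H)) :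
    ∑ i ∈ r.index, Coalgebra.counit (R := k) (r.left i) • r.right i = x := by
  have h := Coalgebra.sum_counit_tmul_eq (R := k) r
  calc ∑ i ∈ r.index, Coalgebra.counit (R := k) (r.left i) • r.right i
      = TensorProduct.lid k H (∑ i ∈ r.index,
          Coalgebra.counit (R := k) (r.left i) ⊗ₜ[k] r.right i) := by
        rw [map_sum]; simp
    _ = TensorProduct.lid k H ((1 : k) ⊗ₜ[k] x) := by rw [h]
    _ = x := by simp

lemma csum_right (x : H) (r : Coalgebra.Repr k x (H × H)) :
    ∑ i ∈ r.index, Coalgebra.counit (R := k) (r.right i) • r.left i = x := by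
  have h := Coalgebra.sum_tmul_counit_eq (R := k) r
  calc ∑ i ∈ r.index, Coalgebra.counit (R := k) (r.right i) • r.left i
      = TensorProduct.rid k H (∑ i ∈ r.index,
          r.left i ⊗ₜ[k] Coalgebra.counit (R := k) (r.right i)) := by
        rw [map_sum]; simp [TensorProduct.smul_tmul]
    _ = TensorProduct.rid k H (x ⊗ₜ[k] (1 : k)) := by rw [h]
    _ = x := by simp

lemma contract_fst_left (α : H ⊗[k] H →ₗ[k] k) (x : H) (r : Coalgebra.Repr k x (H × H)) (m : H) :
    ∑ i ∈ r.index, Coalgebra.counit (R := k) (r.left i) * α (r.right i ⊗ₜ[k] m)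
      = α (x ⊗ₜ[k] m) := by
  have : ∀ i, Coalgebra.counit (R := k) (r.left i) * α (r.right i ⊗ₜ[k] m)
      = α ((Coalgebra.counit (R := k) (r.left i) • r.right i) ⊗ₜ[k] m) := by
    intro i; rw [← TensorProduct.smul_tmul', map_smul, smul_eq_mul]
  simp_rw [this]
  rw [← map_sum, ← TensorProduct.sum_tmul, csum_left]

lemma contract_snd_left (α : H ⊗[k] H →ₗ[k] k) (x : H) (r : Coalgebra.Repr k x (H × H)) (m : H) :
    ∑ i ∈ r.index, Coalgebra.counit (R := k) (r.left i) * α (m ⊗ₜ[k] r.right i)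
      = α (m ⊗ₜ[k] x) := by
  have : ∀ i, Coalgebra.counit (R := k) (r.left i) * α (m ⊗ₜ[k] r.right i)
      = α (m ⊗ₜ[k] (Coalgebra.counit (R := k) (r.left i) • r.right i)) := by
    intro i; rw [TensorProduct.tmul_smul, map_smul, smul_eq_mul]
  simp_rw [this]
  rw [← map_sum, ← TensorProduct.tmul_sum, csum_left]

lemma contract_fst_right (α : H ⊗[k] H →ₗ[k] k) (x : H) (r : Coalgebra.Repr k x (H × H)) (m : H) :
    ∑ i ∈ r.index, Coalgebra.counit (R := k) (r.right i) * α (r.left i ⊗ₜ[k] m)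
      = α (x ⊗ₜ[k] m) := by
  have : ∀ i, Coalgebra.counit (R := k) (r.right i) * α (r.left i ⊗ₜ[k] m)
      = α ((Coalgebra.counit (R := k) (r.right i) • r.left i) ⊗ₜ[k] m) := by
    intro i; rw [← TensorProduct.smul_tmul', map_smul, smul_eq_mul]
  simp_rw [this]
  rw [← map_sum, ← TensorProduct.sum_tmul, csum_right]

lemma contract_snd_right (α : H ⊗[k] H →ₗ[k] k) (x : H) (r : Coalgebra.Repr k x (H × H)) (m : H) :
    ∑ i ∈ r.index, Coalgebra.counit (R := k) (r.right i) * α (m ⊗ₜ[k] r.left i)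
      = α (m ⊗ₜ[k] x) := by
  have : ∀ i, Coalgebra.counit (R := k) (r.right i) * α (m ⊗ₜ[k] r.left i)
      = α (m ⊗ₜ[k] (Coalgebra.counit (R := k) (r.right i) • r.left i)) := by
    intro i; rw [TensorProduct.tmul_smul, map_smul, smul_eq_mul]
  simp_rw [this]
  rw [← map_sum, ← TensorProduct.tmul_sum, csum_right]

lemma contract_eps (x : H) (r : Coalgebra.Repr k x (H × H)) :
    ∑ i ∈ r.index, Coalgebra.counit (R := k) (r.left i)
        * Coalgebra.counit (R := k) (r.right i) = Coalgebra.counit (R := k) x := by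
  have := congrArg (Coalgebra.counit (R := k)) (csum_left x r)
  simpa [map_sum, smul_eq_mul] using this

/-- A representation of `comul (y * z)` built from representations of `y` and `z`. -/
def mulRepr (y z : H) (ry : Coalgebra.Repr k y (H × H)) (rz : Coalgebra.Repr k z (H × H)) :
    Coalgebra.Repr k (y * z) ((H × H) × (H × H)) where
  index := ry.index ×ˢ rz.index
  left p := ry.left p.1 * rz.left p.2
  right p := ry.right p.1 * rz.right p.2
  eq := by
    rw [show CoalgebraStruct.comul (R := k) (y * z)
        = Coalgebra.comul (R := k) y * Coalgebra.comul (R := k) z from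
      Bialgebra.comul_mul y z, ← ry.eq, ← rz.eq, Finset.sum_mul_sum]
    rw [Finset.sum_product]
    simp [Algebra.TensorProduct.tmul_mul_tmul]

@[simp] lemma mulRepr_index (y z : H) (ry : Coalgebra.Repr k y (H × H)) (rz : Coalgebra.Repr k z (H × H)) :
    (mulRepr y z ry rz).index = ry.index ×ˢ rz.index := rfl

lemma comul2_repr {ι κ : Type*} (y z : H) (ry : Coalgebra.Repr k y ι) (rz : Coalgebra.Repr k z κ) :
    comul2 k H (y ⊗ₜ[k] z) = ∑ j ∈ ry.index, ∑ l ∈ rz.index,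
      (ry.left j ⊗ₜ[k] rz.left l) ⊗ₜ[k] (ry.right j ⊗ₜ[k] rz.right l) := by
  rw [show comul2 k H (y ⊗ₜ[k] z) = (TensorProduct.tensorTensorTensorComm k H H H H)
      (Coalgebra.comul (R := k) y ⊗ₜ[k] Coalgebra.comul (R := k) z) from rfl,
    ← ry.eq, ← rz.eq]
  rw [TensorProduct.sum_tmul, map_sum]
  refine Finset.sum_congr rfl fun j _ => ?_
  rw [TensorProduct.tmul_sum, map_sum]
  refine Finset.sum_congr rfl fun l _ => ?_
  simp



lemma comul3_repr (x y z : H) (rx : Coalgebra.Repr k x (H × H)) (ry : Coalgebra.Repr k y (H × H))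
    (rz : Coalgebra.Repr k z (H × H)) :
    comul3 k H (x ⊗ₜ[k] (y ⊗ₜ[k] z)) = ∑ i ∈ rx.index, ∑ j ∈ ry.index, ∑ l ∈ rz.index,
      (rx.left i ⊗ₜ[k] (ry.left j ⊗ₜ[k] rz.left l))
        ⊗ₜ[k] (rx.right i ⊗ₜ[k] (ry.right j ⊗ₜ[k] rz.right l)) := by
  rw [show comul3 k H (x ⊗ₜ[k] (y ⊗ₜ[k] z))
      = (TensorProduct.tensorTensorTensorComm k H H (H ⊗[k] H) (H ⊗[k] H))
        (Coalgebra.comul (R := k) x ⊗ₜ[k] comul2 k H (y ⊗ₜ[k] z)) from rfl,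
    ← rx.eq, comul2_repr y z ry rz]
  rw [TensorProduct.sum_tmul, map_sum]
  refine Finset.sum_congr rfl fun i _ => ?_
  rw [TensorProduct.tmul_sum, map_sum]
  refine Finset.sum_congr rfl fun j _ => ?_
  rw [TensorProduct.tmul_sum, map_sum]
  refine Finset.sum_congr rfl fun l _ => ?_
  simp

lemma conv2_repr {ι κ : Type*} (f g : H ⊗[k] H →ₗ[k] k) (a b : H) (ra : Coalgebra.Repr k a ι)
    (rb : Coalgebra.Repr k b κ) :
    conv2 k H f g (a ⊗ₜ[k] b) = ∑ i ∈ ra.index, ∑ j ∈ rb.index,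
      f (ra.left i ⊗ₜ[k] rb.left j) * g (ra.right i ⊗ₜ[k] rb.right j) := by
  rw [show conv2 k H f g (a ⊗ₜ[k] b)
      = LinearMap.mul' k k (TensorProduct.map f g (comul2 k H (a ⊗ₜ[k] b))) from rfl,
    comul2_repr a b ra rb]
  rw [map_sum, map_sum]
  refine Finset.sum_congr rfl fun i _ => ?_
  rw [map_sum, map_sum]
  refine Finset.sum_congr rfl fun j _ => ?_
  simp

lemma conv3_repr (f g : H ⊗[k] (H ⊗[k] H) →ₗ[k] k) (x y z : H) (rx : Coalgebra.Repr k x (H × H))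
    (ry : Coalgebra.Repr k y (H × H)) (rz : Coalgebra.Repr k z (H × H)) :
    conv3 k H f g (x ⊗ₜ[k] (y ⊗ₜ[k] z)) = ∑ i ∈ rx.index, ∑ j ∈ ry.index, ∑ l ∈ rz.index,
      f (rx.left i ⊗ₜ[k] (ry.left j ⊗ₜ[k] rz.left l))
        * g (rx.right i ⊗ₜ[k] (ry.right j ⊗ₜ[k] rz.right l)) := by
  rw [show conv3 k H f g (x ⊗ₜ[k] (y ⊗ₜ[k] z))
      = LinearMap.mul' k k (TensorProduct.map f g (comul3 k H (x ⊗ₜ[k] (y ⊗ₜ[k] z)))) from rfl,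
    comul3_repr x y z rx ry rz]
  rw [map_sum, map_sum]
  refine Finset.sum_congr rfl fun i _ => ?_
  rw [map_sum, map_sum]
  refine Finset.sum_congr rfl fun j _ => ?_
  rw [map_sum, map_sum]
  refine Finset.sum_congr rfl fun l _ => ?_
  simp

lemma cocLHS_repr (σ : H ⊗[k] H →ₗ[k] k) (x y z : H) (ry : Coalgebra.Repr k y (H × H))
    (rz : Coalgebra.Repr k z (H × H)) :
    cocLHS k H σ (x ⊗ₜ[k] (y ⊗ₜ[k] z)) = ∑ j ∈ ry.index, ∑ l ∈ rz.index,
      σ (ry.left j ⊗ₜ[k] rz.left l) * σ (x ⊗ₜ[k] (ry.right j * rz.right l)) := by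
  rw [show cocLHS k H σ (x ⊗ₜ[k] (y ⊗ₜ[k] z))
      = LinearMap.mul' k k (TensorProduct.map σ
          (σ ∘ₗ TensorProduct.map LinearMap.id (LinearMap.mul' k H))
          ((TensorProduct.leftComm k H (H ⊗[k] H) (H ⊗[k] H))
            (x ⊗ₜ[k] comul2 k H (y ⊗ₜ[k] z)))) from rfl,
    comul2_repr y z ry rz]
  rw [TensorProduct.tmul_sum, map_sum, map_sum, map_sum]
  refine Finset.sum_congr rfl fun i _ => ?_
  rw [TensorProduct.tmul_sum, map_sum, map_sum, map_sum]
  refine Finset.sum_congr rfl fun j _ => ?_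
  simp

lemma cocRHS_repr (σ : H ⊗[k] H →ₗ[k] k) (x y z : H) (rx : Coalgebra.Repr k x (H × H))
    (ry : Coalgebra.Repr k y (H × H)) :
    cocRHS k H σ (x ⊗ₜ[k] (y ⊗ₜ[k] z)) = ∑ i ∈ rx.index, ∑ j ∈ ry.index,
      σ (rx.left i ⊗ₜ[k] ry.left j) * σ ((rx.right i * ry.right j) ⊗ₜ[k] z) := by
  rw [show cocRHS k H σ (x ⊗ₜ[k] (y ⊗ₜ[k] z))
      = LinearMap.mul' k k (TensorProduct.map σ
          (σ ∘ₗ TensorProduct.map (LinearMap.mul' k H) LinearMap.id)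
          ((TensorProduct.assoc k (H ⊗[k] H) (H ⊗[k] H) H)
            ((comul2 k H (x ⊗ₜ[k] y)) ⊗ₜ[k] z))) from rfl,
    comul2_repr x y rx ry]
  rw [TensorProduct.sum_tmul, map_sum, map_sum, map_sum]
  refine Finset.sum_congr rfl fun i _ => ?_
  rw [TensorProduct.sum_tmul, map_sum, map_sum, map_sum]
  refine Finset.sum_congr rfl fun j _ => ?_
  simp

end Stmt6Aux

namespace Stmt6Aux
variable {k H}

/-- `x ⊗ (y ⊗ z) ↦ α (x ⊗ yz)`. -/
def uM (α : H ⊗[k] H →ₗ[k] k) : H ⊗[k] (H ⊗[k] H) →ₗ[k] k :=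
  α ∘ₗ TensorProduct.map LinearMap.id (LinearMap.mul' k H)

/-- `x ⊗ (y ⊗ z) ↦ α (xy ⊗ z)`. -/
def vM (α : H ⊗[k] H →ₗ[k] k) : H ⊗[k] (H ⊗[k] H) →ₗ[k] k :=
  α ∘ₗ TensorProduct.map (LinearMap.mul' k H) LinearMap.id
    ∘ₗ (TensorProduct.assoc k H H H).symm.toLinearMap

/-- `x ⊗ (y ⊗ z) ↦ ε x * α (y ⊗ z)`. -/
def sM (α : H ⊗[k] H →ₗ[k] k) : H ⊗[k] (H ⊗[k] H) →ₗ[k] k :=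
  LinearMap.mul' k k ∘ₗ TensorProduct.map (Coalgebra.counit (R := k) (A := H)) α

/-- `x ⊗ (y ⊗ z) ↦ α (x ⊗ y) * ε z`. -/
def tM (α : H ⊗[k] H →ₗ[k] k) : H ⊗[k] (H ⊗[k] H) →ₗ[k] k :=
  LinearMap.mul' k k
    ∘ₗ TensorProduct.map α (Coalgebra.counit (R := k) (A := H))
    ∘ₗ (TensorProduct.assoc k H H H).symm.toLinearMap

/-- the counit of `H ⊗ (H ⊗ H)` -/
def eps3 : H ⊗[k] (H ⊗[k] H) →ₗ[k] k :=
  LinearMap.mul' k k ∘ₗ TensorProduct.map (Coalgebra.counit (R := k) (A := H)) (epsilon2 k H)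

@[simp] lemma uM_apply (α : H ⊗[k] H →ₗ[k] k) (x y z : H) :
    uM α (x ⊗ₜ[k] (y ⊗ₜ[k] z)) = α (x ⊗ₜ[k] (y * z)) := by simp [uM]

@[simp] lemma vM_apply (α : H ⊗[k] H →ₗ[k] k) (x y z : H) :
    vM α (x ⊗ₜ[k] (y ⊗ₜ[k] z)) = α ((x * y) ⊗ₜ[k] z) := by simp [vM]

@[simp] lemma sM_apply (α : H ⊗[k] H →ₗ[k] k) (x y z : H) :
    sM α (x ⊗ₜ[k] (y ⊗ₜ[k] z))
      = Coalgebra.counit (R := k) x * α (y ⊗ₜ[k] z) := by simp [sM]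

@[simp] lemma tM_apply (α : H ⊗[k] H →ₗ[k] k) (x y z : H) :
    tM α (x ⊗ₜ[k] (y ⊗ₜ[k] z))
      = α (x ⊗ₜ[k] y) * Coalgebra.counit (R := k) z := by simp [tM]

@[simp] lemma eps3_apply (x y z : H) :
    eps3 (x ⊗ₜ[k] (y ⊗ₜ[k] z)) = Coalgebra.counit (R := k) x
      * (Coalgebra.counit (R := k) y * Coalgebra.counit (R := k) z) := by
  simp [eps3, epsilon2]

@[simp] lemma epsilon2_apply (y z : H) :
    epsilon2 k H (y ⊗ₜ[k] z)
      = Coalgebra.counit (R := k) y * Coalgebra.counit (R := k) z := by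
  simp [epsilon2]

/-- the right-hand side of the first identity -/
def rhs1 (σ σ' : H ⊗[k] H →ₗ[k] k) : H ⊗[k] (H ⊗[k] H) →ₗ[k] k :=
  (LinearMap.mul' k k) ∘ₗ TensorProduct.map σ' σ
    ∘ₗ (TensorProduct.assoc k H H (H ⊗[k] H)).symm.toLinearMap
    ∘ₗ TensorProduct.map LinearMap.id (TensorProduct.leftComm k H H H).toLinearMap
    ∘ₗ TensorProduct.map LinearMap.id
        (TensorProduct.map LinearMap.id (TensorProduct.comm k H H).toLinearMap)
    ∘ₗ (TensorProduct.leftComm k H H (H ⊗[k] H)).toLinearMap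
    ∘ₗ TensorProduct.map LinearMap.id (TensorProduct.assoc k H H H).toLinearMap
    ∘ₗ TensorProduct.map LinearMap.id
        (TensorProduct.map (Coalgebra.comul (R := k) (A := H)) LinearMap.id)

/-- the right-hand side of the second identity -/
def rhs2 (σ σ' : H ⊗[k] H →ₗ[k] k) : H ⊗[k] (H ⊗[k] H) →ₗ[k] k :=
  (LinearMap.mul' k k) ∘ₗ TensorProduct.map σ (σ' ∘ₗ (TensorProduct.comm k H H).toLinearMap)
    ∘ₗ (TensorProduct.leftComm k H (H ⊗[k] H) H).toLinearMap
    ∘ₗ TensorProduct.map LinearMap.id (TensorProduct.comm k H (H ⊗[k] H)).toLinearMap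
    ∘ₗ (TensorProduct.leftComm k H H (H ⊗[k] H)).toLinearMap
    ∘ₗ TensorProduct.map LinearMap.id (TensorProduct.assoc k H H H).toLinearMap
    ∘ₗ TensorProduct.map LinearMap.id
        (TensorProduct.map (Coalgebra.comul (R := k) (A := H)) LinearMap.id)

lemma rhs1_repr (σ σ' : H ⊗[k] H →ₗ[k] k) (x y z : H) (ry : Coalgebra.Repr k y (H × H)) :
    rhs1 σ σ' (x ⊗ₜ[k] (y ⊗ₜ[k] z)) = ∑ j ∈ ry.index,
      σ' (ry.left j ⊗ₜ[k] z) * σ (x ⊗ₜ[k] ry.right j) := by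
  rw [show rhs1 σ σ' (x ⊗ₜ[k] (y ⊗ₜ[k] z))
      = LinearMap.mul' k k (TensorProduct.map σ' σ
        ((TensorProduct.assoc k H H (H ⊗[k] H)).symm
        ((TensorProduct.map LinearMap.id (TensorProduct.leftComm k H H H).toLinearMap)
        ((TensorProduct.map LinearMap.id
            (TensorProduct.map LinearMap.id (TensorProduct.comm k H H).toLinearMap))
        ((TensorProduct.leftComm k H H (H ⊗[k] H))
        ((TensorProduct.map LinearMap.id (TensorProduct.assoc k H H H).toLinearMap)
          (x ⊗ₜ[k] (Coalgebra.comul (R := k) y ⊗ₜ[k] z)))))))) from rfl,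
    ← ry.eq]
  rw [TensorProduct.sum_tmul, TensorProduct.tmul_sum]
  simp only [map_sum]
  refine Finset.sum_congr rfl fun j _ => ?_
  simp

lemma rhs2_repr (σ σ' : H ⊗[k] H →ₗ[k] k) (x y z : H) (ry : Coalgebra.Repr k y (H × H)) :
    rhs2 σ σ' (x ⊗ₜ[k] (y ⊗ₜ[k] z)) = ∑ j ∈ ry.index,
      σ (ry.right j ⊗ₜ[k] z) * σ' (x ⊗ₜ[k] ry.left j) := by
  rw [show rhs2 σ σ' (x ⊗ₜ[k] (y ⊗ₜ[k] z))
      = LinearMap.mul' k k (TensorProduct.map σ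
          (σ' ∘ₗ (TensorProduct.comm k H H).toLinearMap)
        ((TensorProduct.leftComm k H (H ⊗[k] H) H)
        ((TensorProduct.map LinearMap.id (TensorProduct.comm k H (H ⊗[k] H)).toLinearMap)
        ((TensorProduct.leftComm k H H (H ⊗[k] H))
        ((TensorProduct.map LinearMap.id (TensorProduct.assoc k H H H).toLinearMap)
          (x ⊗ₜ[k] (Coalgebra.comul (R := k) y ⊗ₜ[k] z))))))) from rfl,
    ← ry.eq]
  rw [TensorProduct.sum_tmul, TensorProduct.tmul_sum]
  simp only [map_sum]
  refine Finset.sum_congr rfl fun j _ => ?_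
  simp

end Stmt6Aux

namespace Stmt6Aux
variable {k H}
open Coalgebra

lemma E1 (σ : H ⊗[k] H →ₗ[k] k) : conv3 k H (sM σ) (uM σ) = cocLHS k H σ := by
  ext x y z
  simp only [AlgebraTensorModule.curry_apply, curry_apply, LinearMap.coe_restrictScalars]
  rw [conv3_repr (sM σ) (uM σ) x y z (ℛ k x) (ℛ k y) (ℛ k z),
    cocLHS_repr σ x y z (ℛ k y) (ℛ k z)]
  simp only [sM_apply, uM_apply]
  rw [Finset.sum_comm]
  refine Finset.sum_congr rfl fun j _ => ?_
  rw [Finset.sum_comm]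
  refine Finset.sum_congr rfl fun l _ => ?_
  calc ∑ i ∈ (ℛ k x).index,
        Coalgebra.counit (R := k) ((ℛ k x).left i) * σ ((ℛ k y).left j ⊗ₜ[k] (ℛ k z).left l)
          * σ ((ℛ k x).right i ⊗ₜ[k] ((ℛ k y).right j * (ℛ k z).right l))
      = σ ((ℛ k y).left j ⊗ₜ[k] (ℛ k z).left l) * ∑ i ∈ (ℛ k x).index,
          Coalgebra.counit (R := k) ((ℛ k x).left i)
            * σ ((ℛ k x).right i ⊗ₜ[k] ((ℛ k y).right j * (ℛ k z).right l)) := by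
        rw [Finset.mul_sum]
        exact Finset.sum_congr rfl fun i _ => by ring
    _ = _ := by rw [contract_fst_left σ x (ℛ k x)]

lemma E2 (σ : H ⊗[k] H →ₗ[k] k) : conv3 k H (tM σ) (vM σ) = cocRHS k H σ := by
  ext x y z
  simp only [AlgebraTensorModule.curry_apply, curry_apply, LinearMap.coe_restrictScalars]
  rw [conv3_repr (tM σ) (vM σ) x y z (ℛ k x) (ℛ k y) (ℛ k z),
    cocRHS_repr σ x y z (ℛ k x) (ℛ k y)]
  simp only [tM_apply, vM_apply]
  refine Finset.sum_congr rfl fun i _ => ?_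
  refine Finset.sum_congr rfl fun j _ => ?_
  calc ∑ l ∈ (ℛ k z).index,
        σ ((ℛ k x).left i ⊗ₜ[k] (ℛ k y).left j) * Coalgebra.counit (R := k) ((ℛ k z).left l)
          * σ (((ℛ k x).right i * (ℛ k y).right j) ⊗ₜ[k] (ℛ k z).right l)
      = σ ((ℛ k x).left i ⊗ₜ[k] (ℛ k y).left j) * ∑ l ∈ (ℛ k z).index,
          Coalgebra.counit (R := k) ((ℛ k z).left l)
            * σ (((ℛ k x).right i * (ℛ k y).right j) ⊗ₜ[k] (ℛ k z).right l) := by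
        rw [Finset.mul_sum]
        exact Finset.sum_congr rfl fun l _ => by ring
    _ = _ := by rw [contract_snd_left σ z (ℛ k z)]

lemma E3 (σ σ' : H ⊗[k] H →ₗ[k] k) (hinv : conv2 k H σ σ' = epsilon2 k H) :
    conv3 k H (uM σ) (uM σ') = eps3 := by
  ext x y z
  simp only [AlgebraTensorModule.curry_apply, curry_apply, LinearMap.coe_restrictScalars]
  rw [conv3_repr (uM σ) (uM σ') x y z (ℛ k x) (ℛ k y) (ℛ k z)]
  simp only [uM_apply]
  have key := conv2_repr σ σ' x (y * z) (ℛ k x) (mulRepr y z (ℛ k y) (ℛ k z))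
  rw [hinv] at key
  calc ∑ i ∈ (ℛ k x).index, ∑ j ∈ (ℛ k y).index, ∑ l ∈ (ℛ k z).index,
        σ ((ℛ k x).left i ⊗ₜ[k] ((ℛ k y).left j * (ℛ k z).left l))
          * σ' ((ℛ k x).right i ⊗ₜ[k] ((ℛ k y).right j * (ℛ k z).right l))
      = ∑ i ∈ (ℛ k x).index, ∑ p ∈ (ℛ k y).index ×ˢ (ℛ k z).index,
          σ ((ℛ k x).left i ⊗ₜ[k] ((mulRepr y z (ℛ k y) (ℛ k z)).left p))
            * σ' ((ℛ k x).right i ⊗ₜ[k] ((mulRepr y z (ℛ k y) (ℛ k z)).right p)) := by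
        refine Finset.sum_congr rfl fun i _ => ?_
        rw [Finset.sum_product]
        rfl
    _ = epsilon2 k H (x ⊗ₜ[k] (y * z)) := key.symm
    _ = _ := by simp [mul_assoc]

lemma E4 (σ σ' : H ⊗[k] H →ₗ[k] k) (hinv : conv2 k H σ σ' = epsilon2 k H) :
    conv3 k H (vM σ) (vM σ') = eps3 := by
  ext x y z
  simp only [AlgebraTensorModule.curry_apply, curry_apply, LinearMap.coe_restrictScalars]
  rw [conv3_repr (vM σ) (vM σ') x y z (ℛ k x) (ℛ k y) (ℛ k z)]
  simp only [vM_apply]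
  have key := conv2_repr σ σ' (x * y) z (mulRepr x y (ℛ k x) (ℛ k y)) (ℛ k z)
  rw [hinv] at key
  calc ∑ i ∈ (ℛ k x).index, ∑ j ∈ (ℛ k y).index, ∑ l ∈ (ℛ k z).index,
        σ (((ℛ k x).left i * (ℛ k y).left j) ⊗ₜ[k] (ℛ k z).left l)
          * σ' (((ℛ k x).right i * (ℛ k y).right j) ⊗ₜ[k] (ℛ k z).right l)
      = ∑ p ∈ (ℛ k x).index ×ˢ (ℛ k y).index, ∑ l ∈ (ℛ k z).index,
          σ (((mulRepr x y (ℛ k x) (ℛ k y)).left p) ⊗ₜ[k] (ℛ k z).left l)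
            * σ' (((mulRepr x y (ℛ k x) (ℛ k y)).right p) ⊗ₜ[k] (ℛ k z).right l) := by
        rw [Finset.sum_product]
        rfl
    _ = epsilon2 k H ((x * y) ⊗ₜ[k] z) := key.symm
    _ = _ := by simp [mul_assoc]

lemma E5 (σ σ' : H ⊗[k] H →ₗ[k] k) (hinv : conv2 k H σ' σ = epsilon2 k H) :
    conv3 k H (sM σ') (sM σ) = eps3 := by
  ext x y z
  simp only [AlgebraTensorModule.curry_apply, curry_apply, LinearMap.coe_restrictScalars]
  rw [conv3_repr (sM σ') (sM σ) x y z (ℛ k x) (ℛ k y) (ℛ k z)]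
  simp only [sM_apply]
  have key := conv2_repr σ' σ y z (ℛ k y) (ℛ k z)
  rw [hinv] at key
  calc ∑ i ∈ (ℛ k x).index, ∑ j ∈ (ℛ k y).index, ∑ l ∈ (ℛ k z).index,
        Coalgebra.counit (R := k) ((ℛ k x).left i) * σ' ((ℛ k y).left j ⊗ₜ[k] (ℛ k z).left l)
          * (Coalgebra.counit (R := k) ((ℛ k x).right i)
              * σ ((ℛ k y).right j ⊗ₜ[k] (ℛ k z).right l))
      = ∑ i ∈ (ℛ k x).index, (Coalgebra.counit (R := k) ((ℛ k x).left i)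
          * Coalgebra.counit (R := k) ((ℛ k x).right i))
          * ∑ j ∈ (ℛ k y).index, ∑ l ∈ (ℛ k z).index,
              σ' ((ℛ k y).left j ⊗ₜ[k] (ℛ k z).left l)
                * σ ((ℛ k y).right j ⊗ₜ[k] (ℛ k z).right l) := by
        refine Finset.sum_congr rfl fun i _ => ?_
        rw [Finset.mul_sum]
        refine Finset.sum_congr rfl fun j _ => ?_
        rw [Finset.mul_sum]
        exact Finset.sum_congr rfl fun l _ => by ring
    _ = (∑ i ∈ (ℛ k x).index, Coalgebra.counit (R := k) ((ℛ k x).left i)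
          * Coalgebra.counit (R := k) ((ℛ k x).right i)) * conv2 k H σ' σ (y ⊗ₜ[k] z) := by
        rw [← Finset.sum_mul]
        congr 1
        rw [conv2_repr σ' σ y z (ℛ k y) (ℛ k z)]
    _ = _ := by rw [contract_eps x (ℛ k x), hinv]; simp

lemma E6 (σ σ' : H ⊗[k] H →ₗ[k] k) (hinv : conv2 k H σ' σ = epsilon2 k H) :
    conv3 k H (tM σ') (tM σ) = eps3 := by
  ext x y z
  simp only [AlgebraTensorModule.curry_apply, curry_apply, LinearMap.coe_restrictScalars]
  rw [conv3_repr (tM σ') (tM σ) x y z (ℛ k x) (ℛ k y) (ℛ k z)]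
  simp only [tM_apply]
  have key := conv2_repr σ' σ x y (ℛ k x) (ℛ k y)
  rw [hinv] at key
  calc ∑ i ∈ (ℛ k x).index, ∑ j ∈ (ℛ k y).index, ∑ l ∈ (ℛ k z).index,
        σ' ((ℛ k x).left i ⊗ₜ[k] (ℛ k y).left j) * Coalgebra.counit (R := k) ((ℛ k z).left l)
          * (σ ((ℛ k x).right i ⊗ₜ[k] (ℛ k y).right j)
              * Coalgebra.counit (R := k) ((ℛ k z).right l))
      = ∑ i ∈ (ℛ k x).index, ∑ j ∈ (ℛ k y).index,
          (σ' ((ℛ k x).left i ⊗ₜ[k] (ℛ k y).left j)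
            * σ ((ℛ k x).right i ⊗ₜ[k] (ℛ k y).right j))
          * ∑ l ∈ (ℛ k z).index, Coalgebra.counit (R := k) ((ℛ k z).left l)
              * Coalgebra.counit (R := k) ((ℛ k z).right l) := by
        refine Finset.sum_congr rfl fun i _ => ?_
        refine Finset.sum_congr rfl fun j _ => ?_
        rw [Finset.mul_sum]
        exact Finset.sum_congr rfl fun l _ => by ring
    _ = (∑ i ∈ (ℛ k x).index, ∑ j ∈ (ℛ k y).index,
          σ' ((ℛ k x).left i ⊗ₜ[k] (ℛ k y).left j)
            * σ ((ℛ k x).right i ⊗ₜ[k] (ℛ k y).right j))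
          * ∑ l ∈ (ℛ k z).index, Coalgebra.counit (R := k) ((ℛ k z).left l)
              * Coalgebra.counit (R := k) ((ℛ k z).right l) := by
        rw [Finset.sum_mul]
        refine Finset.sum_congr rfl fun i _ => ?_
        rw [Finset.sum_mul]
    _ = conv2 k H σ' σ (x ⊗ₜ[k] y) * Coalgebra.counit (R := k) z := by
        rw [contract_eps z (ℛ k z), conv2_repr σ' σ x y (ℛ k x) (ℛ k y)]
    _ = _ := by rw [hinv]; simp [mul_assoc]

lemma E7 (σ σ' : H ⊗[k] H →ₗ[k] k) :
    conv3 k H (sM σ') (tM σ) = rhs1 σ σ' := by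
  ext x y z
  simp only [AlgebraTensorModule.curry_apply, curry_apply, LinearMap.coe_restrictScalars]
  rw [conv3_repr (sM σ') (tM σ) x y z (ℛ k x) (ℛ k y) (ℛ k z),
    rhs1_repr σ σ' x y z (ℛ k y)]
  simp only [sM_apply, tM_apply]
  rw [Finset.sum_comm]
  refine Finset.sum_congr rfl fun j _ => ?_
  calc ∑ i ∈ (ℛ k x).index, ∑ l ∈ (ℛ k z).index,
        Coalgebra.counit (R := k) ((ℛ k x).left i) * σ' ((ℛ k y).left j ⊗ₜ[k] (ℛ k z).left l)
          * (σ ((ℛ k x).right i ⊗ₜ[k] (ℛ k y).right j)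
              * Coalgebra.counit (R := k) ((ℛ k z).right l))
      = ∑ i ∈ (ℛ k x).index, (Coalgebra.counit (R := k) ((ℛ k x).left i)
            * σ ((ℛ k x).right i ⊗ₜ[k] (ℛ k y).right j))
          * ∑ l ∈ (ℛ k z).index, Coalgebra.counit (R := k) ((ℛ k z).right l)
              * σ' ((ℛ k y).left j ⊗ₜ[k] (ℛ k z).left l) := by
        refine Finset.sum_congr rfl fun i _ => ?_
        rw [Finset.mul_sum]
        exact Finset.sum_congr rfl fun l _ => by ring
    _ = (∑ i ∈ (ℛ k x).index, Coalgebra.counit (R := k) ((ℛ k x).left i)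
          * σ ((ℛ k x).right i ⊗ₜ[k] (ℛ k y).right j))
          * (∑ l ∈ (ℛ k z).index, Coalgebra.counit (R := k) ((ℛ k z).right l)
              * σ' ((ℛ k y).left j ⊗ₜ[k] (ℛ k z).left l)) := by
        rw [← Finset.sum_mul]
    _ = _ := by
        rw [contract_fst_left σ x (ℛ k x), contract_snd_right σ' z (ℛ k z)]
        ring

lemma E8 (σ σ' : H ⊗[k] H →ₗ[k] k) :
    conv3 k H (tM σ') (sM σ) = rhs2 σ σ' := by
  ext x y z
  simp only [AlgebraTensorModule.curry_apply, curry_apply, LinearMap.coe_restrictScalars]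
  rw [conv3_repr (tM σ') (sM σ) x y z (ℛ k x) (ℛ k y) (ℛ k z),
    rhs2_repr σ σ' x y z (ℛ k y)]
  simp only [sM_apply, tM_apply]
  rw [Finset.sum_comm]
  refine Finset.sum_congr rfl fun j _ => ?_
  calc ∑ i ∈ (ℛ k x).index, ∑ l ∈ (ℛ k z).index,
        σ' ((ℛ k x).left i ⊗ₜ[k] (ℛ k y).left j) * Coalgebra.counit (R := k) ((ℛ k z).left l)
          * (Coalgebra.counit (R := k) ((ℛ k x).right i)
              * σ ((ℛ k y).right j ⊗ₜ[k] (ℛ k z).right l))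
      = ∑ i ∈ (ℛ k x).index, (Coalgebra.counit (R := k) ((ℛ k x).right i)
            * σ' ((ℛ k x).left i ⊗ₜ[k] (ℛ k y).left j))
          * ∑ l ∈ (ℛ k z).index, Coalgebra.counit (R := k) ((ℛ k z).left l)
              * σ ((ℛ k y).right j ⊗ₜ[k] (ℛ k z).right l) := by
        refine Finset.sum_congr rfl fun i _ => ?_
        rw [Finset.mul_sum]
        exact Finset.sum_congr rfl fun l _ => by ring
    _ = (∑ i ∈ (ℛ k x).index, Coalgebra.counit (R := k) ((ℛ k x).right i)
            * σ' ((ℛ k x).left i ⊗ₜ[k] (ℛ k y).left j))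
          * (∑ l ∈ (ℛ k z).index, Coalgebra.counit (R := k) ((ℛ k z).left l)
              * σ ((ℛ k y).right j ⊗ₜ[k] (ℛ k z).right l)) := by
        rw [← Finset.sum_mul]
    _ = _ := by
        rw [contract_fst_right σ' x (ℛ k x), contract_snd_left σ z (ℛ k z)]
        ring

end Stmt6Aux

namespace Stmt6Aux
section Generic
variable {R : Type*} [CommSemiring R]
variable {C : Type*} [AddCommMonoid C] [Module R C]

/-- generic convolution -/
def conv (Δ : C →ₗ[R] C ⊗[R] C) (f g : C →ₗ[R] R) : C →ₗ[R] R :=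
  LinearMap.mul' R R ∘ₗ TensorProduct.map f g ∘ₗ Δ

lemma conv_assoc (Δ : C →ₗ[R] C ⊗[R] C)
    (hΔ : (TensorProduct.assoc R C C C).toLinearMap ∘ₗ Δ.rTensor C ∘ₗ Δ = Δ.lTensor C ∘ₗ Δ)
    (f g h : C →ₗ[R] R) : conv Δ (conv Δ f g) h = conv Δ f (conv Δ g h) := by
  have e1 : conv Δ (conv Δ f g) h
      = (LinearMap.mul' R R ∘ₗ TensorProduct.map (LinearMap.mul' R R ∘ₗ TensorProduct.map f g) h)
        ∘ₗ (Δ.rTensor C ∘ₗ Δ) := by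
    unfold conv
    ext c
    simp only [LinearMap.comp_apply]
    generalize Δ c = w
    induction w using TensorProduct.induction_on with
    | zero => simp
    | tmul a b => simp [LinearMap.rTensor]
    | add x y hx hy => simp only [map_add, hx, hy]
  have e2 : conv Δ f (conv Δ g h)
      = (LinearMap.mul' R R ∘ₗ TensorProduct.map f (LinearMap.mul' R R ∘ₗ TensorProduct.map g h))
        ∘ₗ (Δ.lTensor C ∘ₗ Δ) := by
    unfold conv
    ext c
    simp only [LinearMap.comp_apply]
    generalize Δ c = w
    induction w using TensorProduct.induction_on with
    | zero => simp
    | tmul a b => simp [LinearMap.lTensor]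
    | add x y hx hy => simp only [map_add, hx, hy]
  have key : (LinearMap.mul' R R ∘ₗ TensorProduct.map (LinearMap.mul' R R ∘ₗ TensorProduct.map f g) h)
      = (LinearMap.mul' R R ∘ₗ TensorProduct.map f (LinearMap.mul' R R ∘ₗ TensorProduct.map g h))
        ∘ₗ (TensorProduct.assoc R C C C).toLinearMap := by
    apply TensorProduct.ext_threefold
    intro a b c
    simp [mul_assoc]
  rw [e1, e2, ← hΔ, key]
  ext c
  simp [LinearMap.comp_apply]

lemma conv_one_left (Δ : C →ₗ[R] C ⊗[R] C) (ε : C →ₗ[R] R)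
    (hε : ε.rTensor C ∘ₗ Δ = TensorProduct.mk R R C 1) (f : C →ₗ[R] R) :
    conv Δ ε f = f := by
  unfold conv
  ext c
  simp only [LinearMap.comp_apply]
  have h1 : TensorProduct.map ε f (Δ c) = (LinearMap.lTensor R f) (ε.rTensor C (Δ c)) := by
    generalize Δ c = w
    induction w using TensorProduct.induction_on with
    | zero => simp
    | tmul a b => simp
    | add x y hx hy => simp only [map_add, hx, hy]
  have h2 := LinearMap.congr_fun hε c
  simp only [LinearMap.comp_apply] at h2
  rw [h1, h2]
  simp

lemma conv_one_right (Δ : C →ₗ[R] C ⊗[R] C) (ε : C →ₗ[R] R)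
    (hε : ε.lTensor C ∘ₗ Δ = (TensorProduct.mk R C R).flip 1) (f : C →ₗ[R] R) :
    conv Δ f ε = f := by
  unfold conv
  ext c
  simp only [LinearMap.comp_apply]
  have h1 : TensorProduct.map f ε (Δ c) = (LinearMap.rTensor R f) (ε.lTensor C (Δ c)) := by
    generalize Δ c = w
    induction w using TensorProduct.induction_on with
    | zero => simp
    | tmul a b => simp
    | add x y hx hy => simp only [map_add, hx, hy]
  have h2 := LinearMap.congr_fun hε c
  simp only [LinearMap.comp_apply] at h2
  rw [h1, h2]
  simp

end Generic

section GenericTensor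
variable {R : Type*} [CommSemiring R]
variable {A B : Type*} [AddCommMonoid A] [AddCommMonoid B] [Module R A] [Module R B]

def tDelta (dA : A →ₗ[R] A ⊗[R] A) (dB : B →ₗ[R] B ⊗[R] B) :
    A ⊗[R] B →ₗ[R] (A ⊗[R] B) ⊗[R] (A ⊗[R] B) :=
  (TensorProduct.tensorTensorTensorComm R A A B B).toLinearMap ∘ₗ TensorProduct.map dA dB

def tEps (eA : A →ₗ[R] R) (eB : B →ₗ[R] R) : A ⊗[R] B →ₗ[R] R :=
  LinearMap.mul' R R ∘ₗ TensorProduct.map eA eB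

lemma tDelta_coassoc (dA : A →ₗ[R] A ⊗[R] A) (dB : B →ₗ[R] B ⊗[R] B)
    (hA : (TensorProduct.assoc R A A A).toLinearMap ∘ₗ dA.rTensor A ∘ₗ dA = dA.lTensor A ∘ₗ dA)
    (hB : (TensorProduct.assoc R B B B).toLinearMap ∘ₗ dB.rTensor B ∘ₗ dB = dB.lTensor B ∘ₗ dB) :
    (TensorProduct.assoc R (A ⊗[R] B) (A ⊗[R] B) (A ⊗[R] B)).toLinearMap
        ∘ₗ (tDelta dA dB).rTensor (A ⊗[R] B) ∘ₗ tDelta dA dB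
      = (tDelta dA dB).lTensor (A ⊗[R] B) ∘ₗ tDelta dA dB := by
  have hA' : dA.rTensor A ∘ₗ dA
      = (TensorProduct.assoc R A A A).symm.toLinearMap ∘ₗ dA.lTensor A ∘ₗ dA := by
    rw [← hA]; ext c; simp
  have hB' : dB.rTensor B ∘ₗ dB
      = (TensorProduct.assoc R B B B).symm.toLinearMap ∘ₗ dB.lTensor B ∘ₗ dB := by
    rw [← hB]; ext c; simp
  have P : (tDelta dA dB).rTensor (A ⊗[R] B)
        ∘ₗ (TensorProduct.tensorTensorTensorComm R A A B B).toLinearMap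
      = TensorProduct.map (TensorProduct.tensorTensorTensorComm R A A B B).toLinearMap
            LinearMap.id
          ∘ₗ (TensorProduct.tensorTensorTensorComm R (A ⊗[R] A) A (B ⊗[R] B) B).toLinearMap
          ∘ₗ TensorProduct.map (dA.rTensor A) (dB.rTensor B) := by
    ext a₁ a₂ b₁ b₂
    simp [tDelta]
  have Q : (tDelta dA dB).lTensor (A ⊗[R] B)
        ∘ₗ (TensorProduct.tensorTensorTensorComm R A A B B).toLinearMap
      = TensorProduct.map LinearMap.id
            (TensorProduct.tensorTensorTensorComm R A A B B).toLinearMap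
          ∘ₗ (TensorProduct.tensorTensorTensorComm R A (A ⊗[R] A) B (B ⊗[R] B)).toLinearMap
          ∘ₗ TensorProduct.map (dA.lTensor A) (dB.lTensor B) := by
    ext a₁ a₂ b₁ b₂
    simp [tDelta]
  have Rr : (TensorProduct.assoc R (A ⊗[R] B) (A ⊗[R] B) (A ⊗[R] B)).toLinearMap
        ∘ₗ TensorProduct.map (TensorProduct.tensorTensorTensorComm R A A B B).toLinearMap
            LinearMap.id
        ∘ₗ (TensorProduct.tensorTensorTensorComm R (A ⊗[R] A) A (B ⊗[R] B) B).toLinearMap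
        ∘ₗ TensorProduct.map (TensorProduct.assoc R A A A).symm.toLinearMap
            (TensorProduct.assoc R B B B).symm.toLinearMap
      = TensorProduct.map LinearMap.id
            (TensorProduct.tensorTensorTensorComm R A A B B).toLinearMap
          ∘ₗ (TensorProduct.tensorTensorTensorComm R A (A ⊗[R] A) B (B ⊗[R] B)).toLinearMap := by
    ext a₁ a₂ a₃ b₁ b₂ b₃
    simp
  ext a b
  simp only [AlgebraTensorModule.curry_apply, curry_apply, LinearMap.coe_restrictScalars,
    LinearMap.comp_apply, LinearEquiv.coe_coe, map_tmul]
  have ha := LinearMap.congr_fun hA' a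
  have hb := LinearMap.congr_fun hB' b
  simp only [LinearMap.comp_apply] at ha hb
  have hP := LinearMap.congr_fun P (dA a ⊗ₜ[R] dB b)
  have hQ := LinearMap.congr_fun Q (dA a ⊗ₜ[R] dB b)
  simp only [LinearMap.comp_apply, map_tmul, LinearEquiv.coe_coe, LinearMap.id_coe, id_eq] at hP hQ
  rw [show (tDelta dA dB) (a ⊗ₜ[R] b)
      = (tensorTensorTensorComm R A A B B) (dA a ⊗ₜ[R] dB b) from rfl, hP, hQ, ha, hb]
  have hR := LinearMap.congr_fun Rr
    ((dA.lTensor A) (dA a) ⊗ₜ[R] (dB.lTensor B) (dB b))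
  simp only [LinearMap.comp_apply, map_tmul, LinearEquiv.coe_coe, LinearMap.id_coe, id_eq] at hR
  exact hR

lemma tDelta_counit_left (dA : A →ₗ[R] A ⊗[R] A) (dB : B →ₗ[R] B ⊗[R] B)
    (eA : A →ₗ[R] R) (eB : B →ₗ[R] R)
    (hA : eA.rTensor A ∘ₗ dA = TensorProduct.mk R R A 1)
    (hB : eB.rTensor B ∘ₗ dB = TensorProduct.mk R R B 1) :
    (tEps eA eB).rTensor (A ⊗[R] B) ∘ₗ tDelta dA dB
      = TensorProduct.mk R R (A ⊗[R] B) 1 := by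
  have P : (tEps eA eB).rTensor (A ⊗[R] B)
        ∘ₗ (TensorProduct.tensorTensorTensorComm R A A B B).toLinearMap
      = TensorProduct.map (LinearMap.mul' R R) LinearMap.id
          ∘ₗ (TensorProduct.tensorTensorTensorComm R R A R B).toLinearMap
          ∘ₗ TensorProduct.map (eA.rTensor A) (eB.rTensor B) := by
    ext a₁ a₂ b₁ b₂
    simp [tEps]
  have ha := LinearMap.congr_fun hA
  have hb := LinearMap.congr_fun hB
  simp only [LinearMap.comp_apply] at ha hb
  ext a b
  have hP := LinearMap.congr_fun P (dA a ⊗ₜ[R] dB b)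
  simp only [LinearMap.comp_apply, map_tmul, LinearEquiv.coe_coe] at hP
  simp only [AlgebraTensorModule.curry_apply, curry_apply, LinearMap.coe_restrictScalars,
    LinearMap.comp_apply, mk_apply]
  rw [show (tDelta dA dB) (a ⊗ₜ[R] b)
      = (tensorTensorTensorComm R A A B B) (dA a ⊗ₜ[R] dB b) from rfl, hP, ha, hb]
  simp

lemma tDelta_counit_right (dA : A →ₗ[R] A ⊗[R] A) (dB : B →ₗ[R] B ⊗[R] B)
    (eA : A →ₗ[R] R) (eB : B →ₗ[R] R)
    (hA : eA.lTensor A ∘ₗ dA = (TensorProduct.mk R A R).flip 1)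
    (hB : eB.lTensor B ∘ₗ dB = (TensorProduct.mk R B R).flip 1) :
    (tEps eA eB).lTensor (A ⊗[R] B) ∘ₗ tDelta dA dB
      = (TensorProduct.mk R (A ⊗[R] B) R).flip 1 := by
  have P : (tEps eA eB).lTensor (A ⊗[R] B)
        ∘ₗ (TensorProduct.tensorTensorTensorComm R A A B B).toLinearMap
      = TensorProduct.map LinearMap.id (LinearMap.mul' R R)
          ∘ₗ (TensorProduct.tensorTensorTensorComm R A R B R).toLinearMap
          ∘ₗ TensorProduct.map (eA.lTensor A) (eB.lTensor B) := by
    ext a₁ a₂ b₁ b₂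
    simp [tEps]
  have ha := LinearMap.congr_fun hA
  have hb := LinearMap.congr_fun hB
  simp only [LinearMap.comp_apply] at ha hb
  ext a b
  have hP := LinearMap.congr_fun P (dA a ⊗ₜ[R] dB b)
  simp only [LinearMap.comp_apply, map_tmul, LinearEquiv.coe_coe] at hP
  simp only [AlgebraTensorModule.curry_apply, curry_apply, LinearMap.coe_restrictScalars,
    LinearMap.comp_apply, LinearMap.flip_apply, mk_apply]
  rw [show (tDelta dA dB) (a ⊗ₜ[R] b)
      = (tensorTensorTensorComm R A A B B) (dA a ⊗ₜ[R] dB b) from rfl, hP, ha, hb]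
  simp

end GenericTensor
end Stmt6Aux

namespace Stmt6Aux
variable {k H}

lemma comul3_coassoc :
    (TensorProduct.assoc k (H ⊗[k] (H ⊗[k] H)) (H ⊗[k] (H ⊗[k] H))
        (H ⊗[k] (H ⊗[k] H))).toLinearMap
        ∘ₗ (comul3 k H).rTensor (H ⊗[k] (H ⊗[k] H)) ∘ₗ comul3 k H
      = (comul3 k H).lTensor (H ⊗[k] (H ⊗[k] H)) ∘ₗ comul3 k H := by
  have h2 := tDelta_coassoc (Coalgebra.comul (R := k) (A := H))
    (Coalgebra.comul (R := k) (A := H)) Coalgebra.coassoc Coalgebra.coassoc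
  exact tDelta_coassoc (Coalgebra.comul (R := k) (A := H)) (comul2 k H)
    Coalgebra.coassoc h2

lemma comul3_counit_left :
    (eps3 (k := k) (H := H)).rTensor (H ⊗[k] (H ⊗[k] H)) ∘ₗ comul3 k H
      = TensorProduct.mk k k (H ⊗[k] (H ⊗[k] H)) 1 := by
  have h2 := tDelta_counit_left (Coalgebra.comul (R := k) (A := H))
    (Coalgebra.comul (R := k) (A := H)) (Coalgebra.counit (R := k) (A := H))
    (Coalgebra.counit (R := k) (A := H)) Coalgebra.rTensor_counit_comp_comul
    Coalgebra.rTensor_counit_comp_comul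
  exact tDelta_counit_left (Coalgebra.comul (R := k) (A := H)) (comul2 k H)
    (Coalgebra.counit (R := k) (A := H)) (epsilon2 k H)
    Coalgebra.rTensor_counit_comp_comul h2

lemma comul3_counit_right :
    (eps3 (k := k) (H := H)).lTensor (H ⊗[k] (H ⊗[k] H)) ∘ₗ comul3 k H
      = (TensorProduct.mk k (H ⊗[k] (H ⊗[k] H)) k).flip 1 := by
  have h2 := tDelta_counit_right (Coalgebra.comul (R := k) (A := H))
    (Coalgebra.comul (R := k) (A := H)) (Coalgebra.counit (R := k) (A := H))
    (Coalgebra.counit (R := k) (A := H)) Coalgebra.lTensor_counit_comp_comul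
    Coalgebra.lTensor_counit_comp_comul
  exact tDelta_counit_right (Coalgebra.comul (R := k) (A := H)) (comul2 k H)
    (Coalgebra.counit (R := k) (A := H)) (epsilon2 k H)
    Coalgebra.lTensor_counit_comp_comul h2

lemma conv3_assoc (f g h : H ⊗[k] (H ⊗[k] H) →ₗ[k] k) :
    conv3 k H (conv3 k H f g) h = conv3 k H f (conv3 k H g h) :=
  conv_assoc (comul3 k H) comul3_coassoc f g h

lemma conv3_one_left (f : H ⊗[k] (H ⊗[k] H) →ₗ[k] k) : conv3 k H eps3 f = f :=
  conv_one_left (comul3 k H) eps3 comul3_counit_left f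

lemma conv3_one_right (f : H ⊗[k] (H ⊗[k] H) →ₗ[k] k) : conv3 k H f eps3 = f :=
  conv_one_right (comul3 k H) eps3 comul3_counit_right f

end Stmt6Aux


/-- For a normalized convolution-invertible 2-cocycle `σ` with inverse `σ'`:
`σ(x₁, y₁z₁) σ'(x₂y₂, z₂) = σ'(y₁, z) σ(x, y₂)` and
`σ(x₁y₁, z₁) σ'(x₂, y₂z₂) = σ(y₂, z) σ'(x, y₁)`. -/
theorem stmt6 (k : Type*) [Field k] (H : Type*) [Ring H] [Bialgebra k H]
    (σ σ' : H ⊗[k] H →ₗ[k] k)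
    (hcoc : IsCocycle k H σ)
    (hinv₁ : conv2 k H σ σ' = epsilon2 k H)
    (hinv₂ : conv2 k H σ' σ = epsilon2 k H) :
    -- first identity
    conv3 k H (σ ∘ₗ TensorProduct.map LinearMap.id (LinearMap.mul' k H))
        (σ' ∘ₗ TensorProduct.map (LinearMap.mul' k H) LinearMap.id
          ∘ₗ (TensorProduct.assoc k H H H).symm.toLinearMap)
      = (LinearMap.mul' k k) ∘ₗ TensorProduct.map σ' σ
          ∘ₗ (TensorProduct.assoc k H H (H ⊗[k] H)).symm.toLinearMap
          ∘ₗ TensorProduct.map LinearMap.id (TensorProduct.leftComm k H H H).toLinearMap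
          ∘ₗ TensorProduct.map LinearMap.id
              (TensorProduct.map LinearMap.id (TensorProduct.comm k H H).toLinearMap)
          ∘ₗ (TensorProduct.leftComm k H H (H ⊗[k] H)).toLinearMap
          ∘ₗ TensorProduct.map LinearMap.id (TensorProduct.assoc k H H H).toLinearMap
          ∘ₗ TensorProduct.map LinearMap.id
              (TensorProduct.map (Coalgebra.comul (R := k) (A := H)) LinearMap.id)
    -- second (dual) identity
    ∧ conv3 k H (σ ∘ₗ TensorProduct.map (LinearMap.mul' k H) LinearMap.id
          ∘ₗ (TensorProduct.assoc k H H H).symm.toLinearMap)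
        (σ' ∘ₗ TensorProduct.map LinearMap.id (LinearMap.mul' k H))
      = (LinearMap.mul' k k) ∘ₗ TensorProduct.map σ (σ' ∘ₗ (TensorProduct.comm k H H).toLinearMap)
          ∘ₗ (TensorProduct.leftComm k H (H ⊗[k] H) H).toLinearMap
          ∘ₗ TensorProduct.map LinearMap.id (TensorProduct.comm k H (H ⊗[k] H)).toLinearMap
          ∘ₗ (TensorProduct.leftComm k H H (H ⊗[k] H)).toLinearMap
          ∘ₗ TensorProduct.map LinearMap.id (TensorProduct.assoc k H H H).toLinearMap
          ∘ₗ TensorProduct.map LinearMap.id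
              (TensorProduct.map (Coalgebra.comul (R := k) (A := H)) LinearMap.id) := by
  have hc := hcoc.2
  have hsu : conv3 k H (Stmt6Aux.sM σ) (Stmt6Aux.uM σ)
      = conv3 k H (Stmt6Aux.tM σ) (Stmt6Aux.vM σ) := by
    rw [Stmt6Aux.E1, Stmt6Aux.E2, hc]
  constructor
  · exact calc conv3 k H (Stmt6Aux.uM σ) (Stmt6Aux.vM σ')
        = conv3 k H Stmt6Aux.eps3 (conv3 k H (Stmt6Aux.uM σ) (Stmt6Aux.vM σ')) :=
          (Stmt6Aux.conv3_one_left _).symm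
      _ = conv3 k H (conv3 k H (Stmt6Aux.sM σ') (Stmt6Aux.sM σ))
            (conv3 k H (Stmt6Aux.uM σ) (Stmt6Aux.vM σ')) := by
          rw [Stmt6Aux.E5 σ σ' hinv₂]
      _ = conv3 k H (Stmt6Aux.sM σ')
            (conv3 k H (Stmt6Aux.sM σ) (conv3 k H (Stmt6Aux.uM σ) (Stmt6Aux.vM σ'))) := by
          rw [Stmt6Aux.conv3_assoc]
      _ = conv3 k H (Stmt6Aux.sM σ')
            (conv3 k H (conv3 k H (Stmt6Aux.sM σ) (Stmt6Aux.uM σ)) (Stmt6Aux.vM σ')) := by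
          rw [Stmt6Aux.conv3_assoc]
      _ = conv3 k H (Stmt6Aux.sM σ')
            (conv3 k H (conv3 k H (Stmt6Aux.tM σ) (Stmt6Aux.vM σ)) (Stmt6Aux.vM σ')) := by
          rw [hsu]
      _ = conv3 k H (Stmt6Aux.sM σ')
            (conv3 k H (Stmt6Aux.tM σ) (conv3 k H (Stmt6Aux.vM σ) (Stmt6Aux.vM σ'))) := by
          rw [Stmt6Aux.conv3_assoc]
      _ = conv3 k H (Stmt6Aux.sM σ') (conv3 k H (Stmt6Aux.tM σ) Stmt6Aux.eps3) := by
          rw [Stmt6Aux.E4 σ σ' hinv₁]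
      _ = conv3 k H (Stmt6Aux.sM σ') (Stmt6Aux.tM σ) := by rw [Stmt6Aux.conv3_one_right]
      _ = Stmt6Aux.rhs1 σ σ' := Stmt6Aux.E7 σ σ'
  · exact calc conv3 k H (Stmt6Aux.vM σ) (Stmt6Aux.uM σ')
        = conv3 k H Stmt6Aux.eps3 (conv3 k H (Stmt6Aux.vM σ) (Stmt6Aux.uM σ')) :=
          (Stmt6Aux.conv3_one_left _).symm
      _ = conv3 k H (conv3 k H (Stmt6Aux.tM σ') (Stmt6Aux.tM σ))
            (conv3 k H (Stmt6Aux.vM σ) (Stmt6Aux.uM σ')) := by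
          rw [Stmt6Aux.E6 σ σ' hinv₂]
      _ = conv3 k H (Stmt6Aux.tM σ')
            (conv3 k H (Stmt6Aux.tM σ) (conv3 k H (Stmt6Aux.vM σ) (Stmt6Aux.uM σ'))) := by
          rw [Stmt6Aux.conv3_assoc]
      _ = conv3 k H (Stmt6Aux.tM σ')
            (conv3 k H (conv3 k H (Stmt6Aux.tM σ) (Stmt6Aux.vM σ)) (Stmt6Aux.uM σ')) := by
          rw [Stmt6Aux.conv3_assoc]
      _ = conv3 k H (Stmt6Aux.tM σ')
            (conv3 k H (conv3 k H (Stmt6Aux.sM σ) (Stmt6Aux.uM σ)) (Stmt6Aux.uM σ')) := by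
          rw [hsu]
      _ = conv3 k H (Stmt6Aux.tM σ')
            (conv3 k H (Stmt6Aux.sM σ) (conv3 k H (Stmt6Aux.uM σ) (Stmt6Aux.uM σ'))) := by
          rw [Stmt6Aux.conv3_assoc]
      _ = conv3 k H (Stmt6Aux.tM σ') (conv3 k H (Stmt6Aux.sM σ) Stmt6Aux.eps3) := by
          rw [Stmt6Aux.E3 σ σ' hinv₁]
      _ = conv3 k H (Stmt6Aux.tM σ') (Stmt6Aux.sM σ) := by rw [Stmt6Aux.conv3_one_right]
      _ = Stmt6Aux.rhs2 σ σ' := Stmt6Aux.E8 σ σ'
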